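/- arXiv:2511.06412 — 5 statements merged into one kernel-verified Lean document; each statement's English description precedes it below -/
import Mathlib

section
/- Let T > 0, let Ω ⊆ ℂⁿ be a bounded open set, and for each t ∈ (0,T) let κ_t be a Borel measure on Ω. Assume: (i) for every compact set J ⊂ (0,T) and every open set U relatively compact in Ω one has sup_{t ∈ J} κ_t(U) < ∞; (ii) for every continuous compactly supported function χ : (0,T) × Ω → ℝ, the map t ↦ ∫_Ω χ(t,·) dκ_t is continuous on (0,T). Then for every Borel set E ⊆ (0,T) × Ω, the map t ↦ κ_t(E_t) is Borel measurable on (0,T), where E_t := {z ∈ Ω : (t,z) ∈ E}. -/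
open MeasureTheory Set Filter
open scoped ENNReal

/-- Auxiliary: continuity of `t ↦ ∫ f dκ t` on `(0,T)` for a fixed spatial test function. -/
private lemma aux_contOn {n : ℕ} {T : ℝ} {Ω : Set (Fin n → ℂ)}
    (κ : ℝ → Measure (Fin n → ℂ))
    (h_cont : ∀ χ : ℝ × (Fin n → ℂ) → ℝ, Continuous χ →
      HasCompactSupport χ → tsupport χ ⊆ Ioo 0 T ×ˢ Ω →
      ContinuousOn (fun t => ∫ z, χ (t, z) ∂(κ t)) (Ioo 0 T))
    {f : (Fin n → ℂ) → ℝ} (hf : Continuous f) (hfc : HasCompactSupport f)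
    (hfΩ : tsupport f ⊆ Ω) :
    ContinuousOn (fun t => ∫ z, f z ∂(κ t)) (Ioo 0 T) := by
  intro t0 ht0
  obtain ⟨a, ha, hat⟩ := exists_between ht0.1
  obtain ⟨b, htb, hbT⟩ := exists_between ht0.2
  have hIcc : Icc a b ⊆ Ioo 0 T := fun x hx => ⟨lt_of_lt_of_le ha hx.1, lt_of_le_of_lt hx.2 hbT⟩
  obtain ⟨φ, hφsupp, hφ1, hφ01⟩ := exists_tsupport_one_of_isOpen_isClosed
    (isOpen_Ioo : IsOpen (Ioo 0 T))
    ((Metric.isBounded_Ioo 0 T).isCompact_closure) isClosed_Icc hIcc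
  have hφK : HasCompactSupport (φ : ℝ → ℝ) :=
    Metric.isCompact_of_isClosed_isBounded (isClosed_tsupport _)
      ((Metric.isBounded_Ioo 0 T).subset hφsupp)
  set χ : ℝ × (Fin n → ℂ) → ℝ := fun p => φ p.1 * f p.2 with hχ
  have hχcont : Continuous χ := (φ.continuous.comp continuous_fst).mul (hf.comp continuous_snd)
  have hχsupp : tsupport χ ⊆ tsupport (φ : ℝ → ℝ) ×ˢ tsupport f := by
    apply closure_minimal _ ((isClosed_tsupport _).prod (isClosed_tsupport _))
    intro p hp
    have h1 : φ p.1 ≠ 0 := fun h => hp (by simp [hχ, h])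
    have h2 : f p.2 ≠ 0 := fun h => hp (by simp [hχ, h])
    exact ⟨subset_tsupport _ h1, subset_tsupport _ h2⟩
  have hχK : HasCompactSupport χ :=
    HasCompactSupport.intro (hφK.prod hfc) fun p hp => by
      by_contra h
      exact hp (hχsupp (subset_tsupport _ h))
  have hχΩ : tsupport χ ⊆ Ioo 0 T ×ˢ Ω :=
    hχsupp.trans (prod_mono hφsupp hfΩ)
  have H := h_cont χ hχcont hχK hχΩ
  have Heq : ∀ t : ℝ, ∫ z, χ (t, z) ∂(κ t) = φ t * ∫ z, f z ∂(κ t) := by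
    intro t
    simpa [hχ] using integral_const_mul (φ t) f (μ := κ t)
  have H' : ContinuousWithinAt (fun t => φ t * ∫ z, f z ∂(κ t)) (Ioo 0 T) t0 := by
    have := H t0 ht0
    simpa only [Heq] using this
  have hmem : Ioo a b ∈ nhds t0 := Ioo_mem_nhds hat htb
  refine H'.congr_of_eventuallyEq ?_ ?_ |>.mono (subset_refl _)
  · filter_upwards [mem_nhdsWithin_of_mem_nhds hmem] with t ht
    rw [hφ1 (Ioo_subset_Icc_self ht)]
    simp
  · rw [hφ1 ⟨le_of_lt hat, le_of_lt htb⟩]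
    simp

/-- Auxiliary: finiteness of local masses. -/
private lemma aux_fin {n : ℕ} {T : ℝ}
    {Ω : Set (Fin n → ℂ)} (κ : ℝ → Measure (Fin n → ℂ))
    (h_mass : ∀ J : Set ℝ, IsCompact J → J ⊆ Ioo 0 T →
      ∀ U : Set ((Fin n → ℂ)), IsOpen U → IsCompact (closure U) →
        closure U ⊆ Ω → (⨆ t ∈ J, κ t U) < ⊤)
    {U : Set (Fin n → ℂ)} (hU : IsOpen U) (hUc : IsCompact (closure U))
    (hUΩ : closure U ⊆ Ω) (t : Ioo 0 T) : κ (↑t) U ≠ ⊤ := by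
  have := h_mass {(t : ℝ)} isCompact_singleton (singleton_subset_iff.2 t.2) U hU hUc hUΩ
  simp only [mem_singleton_iff, iSup_iSup_eq_left] at this
  exact this.ne

/-- Auxiliary: measurability of `t ↦ κ t U` for relatively compact open `U`. -/
private lemma aux_measU {n : ℕ} {T : ℝ}
    {Ω : Set (Fin n → ℂ)} (hΩ_open : IsOpen Ω)
    (κ : ℝ → Measure (Fin n → ℂ))
    (h_mass : ∀ J : Set ℝ, IsCompact J → J ⊆ Ioo 0 T →
      ∀ U : Set ((Fin n → ℂ)), IsOpen U → IsCompact (closure U) →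
        closure U ⊆ Ω → (⨆ t ∈ J, κ t U) < ⊤)
    (h_cont : ∀ χ : ℝ × (Fin n → ℂ) → ℝ, Continuous χ →
      HasCompactSupport χ → tsupport χ ⊆ Ioo 0 T ×ˢ Ω →
      ContinuousOn (fun t => ∫ z, χ (t, z) ∂(κ t)) (Ioo 0 T))
    {U : Set (Fin n → ℂ)} (hU : IsOpen U) (hUc : IsCompact (closure U))
    (hUΩ : closure U ⊆ Ω) :
    Measurable (fun t : Ioo 0 T => κ (↑t) U) := by
  by_cases hc : (Uᶜ).Nonempty
  · -- main case
    -- a relatively compact open neighborhood V of closure U inside Ω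
    obtain ⟨L, hL, hUL, hLΩ⟩ := exists_compact_between hUc hΩ_open hUΩ
    set V : Set (Fin n → ℂ) := interior L with hV
    have hVopen : IsOpen V := isOpen_interior
    have hclV : closure V ⊆ L := closure_minimal interior_subset hL.isClosed
    have hVc : IsCompact (closure V) := hL.of_isClosed_subset isClosed_closure hclV
    have hVΩ : closure V ⊆ Ω := hclV.trans hLΩ
    have hVmeas : MeasurableSet V := hVopen.measurableSet
    have hUV : U ⊆ V := (subset_closure.trans hUL)
    set f : ℕ → (Fin n → ℂ) → ℝ :=
      fun j z => min 1 ((j + 1) * Metric.infDist z Uᶜ) with hfdef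
    have hfcont : ∀ j, Continuous (f j) := fun j =>
      continuous_const.min (continuous_const.mul (Metric.continuous_infDist_pt _))
    have hfnonneg : ∀ j z, 0 ≤ f j z := fun j z =>
      le_min zero_le_one (mul_nonneg (by positivity) Metric.infDist_nonneg)
    have hfle1 : ∀ j z, f j z ≤ 1 := fun j z => min_le_left _ _
    have hfzero : ∀ j z, z ∉ U → f j z = 0 := by
      intro j z hz
      have : Metric.infDist z Uᶜ = 0 := Metric.infDist_zero_of_mem hz
      simp [hfdef, this]
    have hfsupp : ∀ j, tsupport (f j) ⊆ closure U := by
      intro j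
      apply closure_mono
      intro z hz
      by_contra h
      exact hz (hfzero j z h)
    have hfK : ∀ j, HasCompactSupport (f j) := fun j =>
      hUc.of_isClosed_subset (isClosed_tsupport _) (hfsupp j)
    have hfΩ : ∀ j, tsupport (f j) ⊆ Ω := fun j => (hfsupp j).trans hUΩ
    have hmono : ∀ z, Monotone fun j => ENNReal.ofReal (f j z) := by
      intro z i j hij
      apply ENNReal.ofReal_le_ofReal
      refine min_le_min le_rfl ?_
      have : ((i : ℝ) + 1) ≤ (j : ℝ) + 1 := by exact_mod_cast Nat.succ_le_succ hij
      exact mul_le_mul_of_nonneg_right this Metric.infDist_nonneg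
    have hsup : ∀ z, (⨆ j, ENNReal.ofReal (f j z)) = U.indicator (fun _ => (1 : ℝ≥0∞)) z := by
      intro z
      by_cases hz : z ∈ U
      · have hd : 0 < Metric.infDist z Uᶜ :=
          (hU.isClosed_compl.notMem_iff_infDist_pos hc).1 (by simpa using hz)
        rw [indicator_of_mem hz]
        apply le_antisymm
        · exact iSup_le fun j => by
            simpa using ENNReal.ofReal_le_ofReal (hfle1 j z)
        · obtain ⟨j, hj⟩ := exists_nat_ge (1 / Metric.infDist z Uᶜ)
          have h1 : (1 : ℝ) ≤ ((j : ℝ) + 1) * Metric.infDist z Uᶜ := by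
            rw [div_le_iff₀ hd] at hj
            nlinarith [Metric.infDist_nonneg (x := z) (s := Uᶜ)]
          have : f j z = 1 := min_eq_left h1 ▸ rfl
          calc (1 : ℝ≥0∞) = ENNReal.ofReal (f j z) := by rw [this]; simp
          _ ≤ ⨆ j, ENNReal.ofReal (f j z) := le_iSup (fun j => ENNReal.ofReal (f j z)) j
      · rw [indicator_of_notMem hz]
        simp [hfzero _ _ hz]
    have key : ∀ t : Ioo 0 T, κ (↑t) U = ⨆ j, ENNReal.ofReal (∫ z, f j z ∂(κ ↑t)) := by
      intro t
      have hVfin : κ (↑t) V ≠ ⊤ := aux_fin κ h_mass hVopen hVc hVΩ t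
      have hint : ∀ j, Integrable (f j) (κ ↑t) := by
        intro j
        have hgint : Integrable (V.indicator fun _ => (1 : ℝ)) (κ ↑t) :=
          (integrable_indicator_iff hVmeas).2
            (integrableOn_const hVfin)
        refine Integrable.mono' hgint (hfcont j).aestronglyMeasurable ?_
        filter_upwards with z
        by_cases hz : z ∈ V
        · rw [indicator_of_mem hz, Real.norm_eq_abs, abs_of_nonneg (hfnonneg j z)]
          exact hfle1 j z
        · rw [indicator_of_notMem hz, hfzero j z fun h => hz (hUV h)]
          simp
      have h1 : ∀ j, ENNReal.ofReal (∫ z, f j z ∂(κ ↑t)) =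
          ∫⁻ z, ENNReal.ofReal (f j z) ∂(κ ↑t) := fun j =>
        ofReal_integral_eq_lintegral_ofReal (hint j) (ae_of_all _ (hfnonneg j))
      calc κ (↑t) U = ∫⁻ z, U.indicator (fun _ => (1 : ℝ≥0∞)) z ∂(κ ↑t) :=
            (lintegral_indicator_one hU.measurableSet).symm
      _ = ∫⁻ z, ⨆ j, ENNReal.ofReal (f j z) ∂(κ ↑t) := by
            congr 1; funext z; rw [hsup z]
      _ = ⨆ j, ∫⁻ z, ENNReal.ofReal (f j z) ∂(κ ↑t) :=
            lintegral_iSup (fun j => ENNReal.measurable_ofReal.comp (hfcont j).measurable)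
              (fun i j hij z => hmono z hij)
      _ = ⨆ j, ENNReal.ofReal (∫ z, f j z ∂(κ ↑t)) := by simp_rw [h1]
    have hmeasj : ∀ j, Measurable fun t : Ioo 0 T => ∫ z, f j z ∂(κ ↑t) := by
      intro j
      have := (aux_contOn κ h_cont (hfcont j) (hfK j) (hfΩ j)).restrict
      exact this.measurable
    have : (fun t : Ioo 0 T => κ (↑t) U)
        = fun t : Ioo 0 T => ⨆ j, ENNReal.ofReal (∫ z, f j z ∂(κ ↑t)) := funext key
    rw [this]
    exact Measurable.iSup fun j => ENNReal.measurable_ofReal.comp (hmeasj j)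
  · -- `U = univ`, degenerate case
    have hUuniv : U = univ := by
      rw [← compl_empty_iff]
      exact not_nonempty_iff_eq_empty.1 hc
    have hclU : closure U = univ := by rw [hUuniv, closure_univ]
    have hΩuniv : Ω = univ := univ_subset_iff.1 (hclU ▸ hUΩ)
    have hfK : HasCompactSupport (fun _ : Fin n → ℂ => (1 : ℝ)) :=
      HasCompactSupport.intro (hclU ▸ hUc) (fun x hx => absurd (mem_univ x) hx)
    have hcont1 := aux_contOn κ h_cont continuous_const hfK
      (by rw [hΩuniv]; exact subset_univ _)
    have hmeas1 : Measurable fun t : Ioo 0 T => ∫ z, (1 : ℝ) ∂(κ ↑t) :=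
      hcont1.restrict.measurable
    have key : ∀ t : Ioo 0 T, κ (↑t) U = ENNReal.ofReal (∫ z, (1 : ℝ) ∂(κ ↑t)) := by
      intro t
      have hfin : κ (↑t) U ≠ ⊤ := aux_fin κ h_mass hU hUc hUΩ t
      rw [integral_const, smul_eq_mul, mul_one, hUuniv]
      rw [measureReal_def, ENNReal.ofReal_toReal (a := κ (↑t) univ) (by rw [← hUuniv]; exact hfin)]
    have : (fun t : Ioo 0 T => κ (↑t) U)
        = fun t : Ioo 0 T => ENNReal.ofReal (∫ z, (1 : ℝ) ∂(κ ↑t)) := funext key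
    rw [this]
    exact ENNReal.measurable_ofReal.comp hmeas1

/-- Auxiliary: measurability of `t ↦ κ t (B ∩ U)` for all Borel `B`. -/
private lemma aux_measB {n : ℕ} {T : ℝ}
    {Ω : Set (Fin n → ℂ)} (hΩ_open : IsOpen Ω)
    (κ : ℝ → Measure (Fin n → ℂ))
    (h_mass : ∀ J : Set ℝ, IsCompact J → J ⊆ Ioo 0 T →
      ∀ U : Set ((Fin n → ℂ)), IsOpen U → IsCompact (closure U) →
        closure U ⊆ Ω → (⨆ t ∈ J, κ t U) < ⊤)
    (h_cont : ∀ χ : ℝ × (Fin n → ℂ) → ℝ, Continuous χ →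
      HasCompactSupport χ → tsupport χ ⊆ Ioo 0 T ×ˢ Ω →
      ContinuousOn (fun t => ∫ z, χ (t, z) ∂(κ t)) (Ioo 0 T))
    {U : Set (Fin n → ℂ)} (hU : IsOpen U) (hUc : IsCompact (closure U))
    (hUΩ : closure U ⊆ Ω) :
    ∀ B : Set (Fin n → ℂ), MeasurableSet B →
      Measurable (fun t : Ioo 0 T => κ (↑t) (B ∩ U)) := by
  have hUmeas := hU.measurableSet
  have h_eq : (inferInstance : MeasurableSpace (Fin n → ℂ))
      = MeasurableSpace.generateFrom {s : Set (Fin n → ℂ) | IsOpen s} :=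
    BorelSpace.measurable_eq
  refine MeasurableSpace.induction_on_inter h_eq ?_ ?_ ?_ ?_ ?_
  · intro s hs t ht _
    rw [mem_setOf_eq] at hs ht
    exact hs.inter ht
  · simpa using (measurable_const : Measurable fun _ : Ioo 0 T => (0 : ℝ≥0∞))
  · intro B hB
    rw [mem_setOf_eq] at hB
    exact aux_measU hΩ_open κ h_mass h_cont (hB.inter hU)
      (hUc.of_isClosed_subset isClosed_closure (closure_mono inter_subset_right))
      ((closure_mono inter_subset_right).trans hUΩ)
  · intro B hBmeas hC
    have key : ∀ t : Ioo 0 T, κ (↑t) (Bᶜ ∩ U) = κ (↑t) U - κ (↑t) (B ∩ U) := by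
      intro t
      have h1 : Bᶜ ∩ U = U \ (B ∩ U) := by ext z; by_cases hz : z ∈ B <;> simp [hz]
      rw [h1, measure_diff inter_subset_right (hBmeas.inter hUmeas).nullMeasurableSet
        (ne_top_of_le_ne_top (aux_fin κ h_mass hU hUc hUΩ t)
          (measure_mono inter_subset_right))]
    have : (fun t : Ioo 0 T => κ (↑t) (Bᶜ ∩ U))
        = fun t : Ioo 0 T => κ (↑t) U - κ (↑t) (B ∩ U) := funext key
    rw [this]
    exact (aux_measU hΩ_open κ h_mass h_cont hU hUc hUΩ).sub hC
  · intro g hdisj hgmeas hC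
    have key : ∀ t : Ioo 0 T, κ (↑t) ((⋃ i, g i) ∩ U) = ∑' i, κ (↑t) (g i ∩ U) := by
      intro t
      rw [iUnion_inter, measure_iUnion
        (hdisj.mono fun i j h => h.mono inter_subset_left inter_subset_left)
        (fun i => (hgmeas i).inter hUmeas)]
    have : (fun t : Ioo 0 T => κ (↑t) ((⋃ i, g i) ∩ U))
        = fun t : Ioo 0 T => ∑' i, κ (↑t) (g i ∩ U) := funext key
    rw [this]
    exact Measurable.ennreal_tsum hC

/-- Lemma 2.2 of the paper, measure-theoretic content.
Let `T > 0`, `Ω ⊆ ℂⁿ` bounded open, and for each `t ∈ (0,T)` let `κ t` be a Borel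
measure on `Ω`. Assume (i) uniform local mass bounds on compact time sets and
relatively compact open subsets of `Ω`, and (ii) continuity of
`t ↦ ∫ χ(t,·) dκ t` for every continuous compactly supported test function `χ`
on `(0,T) × Ω`. Then for every Borel set `E ⊆ (0,T) × Ω`, the fiber-mass map
`t ↦ κ t (E_t)` is Borel measurable on `(0,T)`. -/
theorem stmt_0 {n : ℕ} (T : ℝ) (hT : 0 < T)
    (Ω : Set ((Fin n → ℂ))) (hΩ_open : IsOpen Ω)
    (hΩ_bdd : Bornology.IsBounded Ω)
    (κ : ℝ → Measure ((Fin n → ℂ)))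
    (h_mass : ∀ J : Set ℝ, IsCompact J → J ⊆ Ioo 0 T →
      ∀ U : Set ((Fin n → ℂ)), IsOpen U → IsCompact (closure U) →
        closure U ⊆ Ω → (⨆ t ∈ J, κ t U) < ⊤)
    (h_cont : ∀ χ : ℝ × (Fin n → ℂ) → ℝ, Continuous χ →
      HasCompactSupport χ → tsupport χ ⊆ Ioo 0 T ×ˢ Ω →
      ContinuousOn (fun t => ∫ z, χ (t, z) ∂(κ t)) (Ioo 0 T))
    (E : Set (ℝ × (Fin n → ℂ))) (hE : MeasurableSet E)
    (hE_sub : E ⊆ Ioo 0 T ×ˢ Ω) :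
    Measurable (fun t : Ioo 0 T => κ t {z | ((t : ℝ), z) ∈ E}) := by
  classical
  -- exhaustion of Ω by relatively compact open sets
  set W : ℕ → Set (Fin n → ℂ) :=
    fun k => {z | ((k : ℝ≥0∞) + 1)⁻¹ < EMetric.infEdist z Ωᶜ} with hWdef
  have hWopen : ∀ k, IsOpen (W k) := fun k =>
    isOpen_Ioi.preimage EMetric.continuous_infEdist
  have hWsubΩ : ∀ k, W k ⊆ Ω := by
    intro k z hz
    by_contra h
    have : EMetric.infEdist z Ωᶜ = 0 := EMetric.infEdist_zero_of_mem h
    rw [hWdef] at hz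
    simp only [mem_setOf_eq, this] at hz
    exact absurd hz (by simp)
  have hWcl : ∀ k, closure (W k) ⊆ {z | ((k : ℝ≥0∞) + 1)⁻¹ ≤ EMetric.infEdist z Ωᶜ} := by
    intro k
    apply closure_minimal
    · intro z hz
      show ((k : ℝ≥0∞) + 1)⁻¹ ≤ EMetric.infEdist z Ωᶜ
      exact le_of_lt (show ((k : ℝ≥0∞) + 1)⁻¹ < EMetric.infEdist z Ωᶜ from hz)
    · exact isClosed_le continuous_const EMetric.continuous_infEdist
  have hWclΩ : ∀ k, closure (W k) ⊆ Ω := by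
    intro k z hz
    by_contra h
    have h0 : EMetric.infEdist z Ωᶜ = 0 := EMetric.infEdist_zero_of_mem h
    have := hWcl k hz
    rw [mem_setOf_eq, h0, le_zero_iff] at this
    exact (ENNReal.inv_ne_zero.2 (by simp)) this
  have hWc : ∀ k, IsCompact (closure (W k)) := fun k =>
    ((hΩ_bdd.subset (hWsubΩ k)).closure).isCompact_closure.of_isClosed_subset
      isClosed_closure (by rw [closure_closure])
  have hWmono : Monotone W := by
    intro k l hkl z hz
    have hz' : ((k : ℝ≥0∞) + 1)⁻¹ < EMetric.infEdist z Ωᶜ := hz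
    show ((l : ℝ≥0∞) + 1)⁻¹ < EMetric.infEdist z Ωᶜ
    refine lt_of_le_of_lt ?_ hz'
    apply ENNReal.inv_le_inv'
    have : (k : ℝ≥0∞) ≤ (l : ℝ≥0∞) := by exact_mod_cast hkl
    exact add_le_add this le_rfl
  have hWunion : ⋃ k, W k = Ω := by
    apply subset_antisymm (iUnion_subset hWsubΩ)
    intro z hz
    have hne : EMetric.infEdist z Ωᶜ ≠ 0 := by
      intro h0
      have : z ∈ closure Ωᶜ := EMetric.mem_closure_iff_infEdist_zero.2 h0
      rw [hΩ_open.isClosed_compl.closure_eq] at this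
      exact this hz
    obtain ⟨m, hm⟩ := ENNReal.exists_inv_nat_lt hne
    refine mem_iUnion.2 ⟨m, ?_⟩
    show ((m : ℝ≥0∞) + 1)⁻¹ < EMetric.infEdist z Ωᶜ
    refine lt_of_le_of_lt ?_ hm
    apply ENNReal.inv_le_inv'
    simp
  have hWmeas : ∀ k, MeasurableSet (W k) := fun k => (hWopen k).measurableSet
  -- the fiber-measurability motive via π-λ on the product σ-algebra
  have main : ∀ E' : Set (ℝ × (Fin n → ℂ)), MeasurableSet E' →
      ∀ k, Measurable fun t : Ioo 0 T => κ (↑t) ({z | ((t : ℝ), z) ∈ E'} ∩ W k) := by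
    refine MeasurableSpace.induction_on_inter generateFrom_prod.symm isPiSystem_prod ?_ ?_ ?_ ?_
    · intro k
      simpa using (measurable_const : Measurable fun _ : Ioo 0 T => (0 : ℝ≥0∞))
    · rintro _ ⟨A, hA, B, hB, rfl⟩ k
      have key : (fun t : Ioo 0 T => κ (↑t) ({z | ((t : ℝ), z) ∈ A ×ˢ B} ∩ W k))
          = fun t : Ioo 0 T =>
            (Subtype.val ⁻¹' A).indicator (fun t : Ioo 0 T => κ (↑t) (B ∩ W k)) t := by
        funext t
        by_cases h : (t : ℝ) ∈ A
        · have hfib : {z | ((t : ℝ), z) ∈ A ×ˢ B} = B := by ext z; simp [h]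
          rw [hfib, indicator_of_mem (by simpa using h)]
        · have hfib : {z | ((t : ℝ), z) ∈ A ×ˢ B} = ∅ := by ext z; simp [h]
          rw [hfib, indicator_of_notMem (by simpa using h)]
          simp
      rw [key]
      exact (aux_measB hΩ_open κ h_mass h_cont (hWopen k) (hWc k) (hWclΩ k) B hB).indicator
        (measurable_subtype_coe hA)
    · intro E' hE' hC k
      have key : ∀ t : Ioo 0 T, κ (↑t) ({z | ((t : ℝ), z) ∈ E'ᶜ} ∩ W k)
          = κ (↑t) (W k) - κ (↑t) ({z | ((t : ℝ), z) ∈ E'} ∩ W k) := by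
        intro t
        have hF : MeasurableSet {z | ((t : ℝ), z) ∈ E'} := measurable_prodMk_left hE'
        have h1 : {z | ((t : ℝ), z) ∈ E'ᶜ} ∩ W k
            = W k \ ({z | ((t : ℝ), z) ∈ E'} ∩ W k) := by
          ext z; by_cases hz : ((t : ℝ), z) ∈ E' <;> simp [hz]
        rw [h1, measure_diff inter_subset_right (hF.inter (hWmeas k)).nullMeasurableSet
          (ne_top_of_le_ne_top (aux_fin κ h_mass (hWopen k) (hWc k) (hWclΩ k) t)
            (measure_mono inter_subset_right))]
      have heq : (fun t : Ioo 0 T => κ (↑t) ({z | ((t : ℝ), z) ∈ E'ᶜ} ∩ W k))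
          = fun t : Ioo 0 T => κ (↑t) (W k) - κ (↑t) ({z | ((t : ℝ), z) ∈ E'} ∩ W k) := funext key
      rw [heq]
      have hWk : Measurable fun t : Ioo 0 T => κ (↑t) (W k) := by
        simpa using aux_measB hΩ_open κ h_mass h_cont (hWopen k) (hWc k) (hWclΩ k)
          univ MeasurableSet.univ
      exact hWk.sub (hC k)
    · intro g hdisj hgmeas hC k
      have key : ∀ t : Ioo 0 T, κ (↑t) ({z | ((t : ℝ), z) ∈ ⋃ i, g i} ∩ W k)
          = ∑' i, κ (↑t) ({z | ((t : ℝ), z) ∈ g i} ∩ W k) := by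
        intro t
        have hfib : {z | ((t : ℝ), z) ∈ ⋃ i, g i} = ⋃ i, {z | ((t : ℝ), z) ∈ g i} := by
          ext z; simp [mem_iUnion]
        rw [hfib, iUnion_inter]
        exact measure_iUnion
          (fun i j hij => (((hdisj hij).preimage (Prod.mk (t : ℝ)))).mono
            inter_subset_left inter_subset_left)
          (fun i => ((measurable_prodMk_left (hgmeas i)).inter (hWmeas k)))
      have heq : (fun t : Ioo 0 T => κ (↑t) ({z | ((t : ℝ), z) ∈ ⋃ i, g i} ∩ W k))
          = fun t : Ioo 0 T => ∑' i, κ (↑t) ({z | ((t : ℝ), z) ∈ g i} ∩ W k) := funext key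
      rw [heq]
      exact Measurable.ennreal_tsum fun i => hC i k
  have hC := main E hE
  have key : ∀ t : Ioo 0 T, κ (↑t) {z | ((t : ℝ), z) ∈ E}
      = ⨆ k, κ (↑t) ({z | ((t : ℝ), z) ∈ E} ∩ W k) := by
    intro t
    have hsub : {z | ((t : ℝ), z) ∈ E} ⊆ Ω := fun z hz => (hE_sub hz).2
    have hfib : {z | ((t : ℝ), z) ∈ E} = ⋃ k, ({z | ((t : ℝ), z) ∈ E} ∩ W k) := by
      rw [← inter_iUnion, hWunion]
      exact (inter_eq_left.2 hsub).symm
    have hmono2 : Monotone fun k => ({z | ((t : ℝ), z) ∈ E} ∩ W k) :=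
      fun k l hkl => inter_subset_inter_right _ (hWmono hkl)
    calc κ (↑t) {z | ((t : ℝ), z) ∈ E}
        = κ (↑t) (⋃ k, ({z | ((t : ℝ), z) ∈ E} ∩ W k)) := congrArg _ hfib
      _ = ⨆ k, κ (↑t) ({z | ((t : ℝ), z) ∈ E} ∩ W k) :=
          Directed.measure_iUnion hmono2.directed_le
  have heq : (fun t : Ioo 0 T => κ (↑t) {z | ((t : ℝ), z) ∈ E})
      = fun t : Ioo 0 T => ⨆ k, κ (↑t) ({z | ((t : ℝ), z) ∈ E} ∩ W k) := funext key
  rw [heq]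
  exact Measurable.iSup fun k => hC k
end

section
/- Let C > 0, ε > 0, and 0 < δ ≤ ε/(6C). Let t ∈ ℝ and let u, v be real-valued functions defined on an open interval J containing [t−δ, t] such that both u and v are C-semiconcave on J, and such that u is differentiable on J with |u'(s₁) − u'(s₂)| ≤ C|s₁ − s₂| for all s₁, s₂ ∈ J. If (u(t) − u(t−δ))/δ > (v(t) − v(t−δ))/δ + ε, then u'(t) > ∂⁻v(t) + ε/2, where ∂⁻v(t) is the left derivative of v at t (which exists by semiconcavity). -/
open Set Filter Topology

/-- the key real-variable step, inequalities (3.3)–(3.5), in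
the proof of the paper's Lemma 3.3. Let `C > 0`, `ε > 0`, `0 < δ ≤ ε/(6C)`,
let `J` be an open interval containing `[t-δ, t]`, and let `u, v` be
`C`-semiconcave on `J` (i.e. `s ↦ u s - C s²` and `s ↦ v s - C s²` are concave
on `J`), with `u` differentiable on `J` and `|u'(s₁) - u'(s₂)| ≤ C |s₁ - s₂|`
on `J`. If `(u t - u (t-δ))/δ > (v t - v (t-δ))/δ + ε`, then the left
derivative `∂⁻v(t)` exists and `u'(t) > ∂⁻v(t) + ε/2`. -/
theorem stmt_4 (C ε δ t : ℝ) (hC : 0 < C) (hε : 0 < ε) (hδ : 0 < δ)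
    (hδε : δ ≤ ε / (6 * C)) (J : Set ℝ) (hJ_open : IsOpen J)
    (hJ_conv : Convex ℝ J) (hJ : Icc (t - δ) t ⊆ J)
    (u v : ℝ → ℝ) (u' : ℝ → ℝ)
    (hu_sc : ConcaveOn ℝ J (fun s => u s - C * s ^ 2))
    (hv_sc : ConcaveOn ℝ J (fun s => v s - C * s ^ 2))
    (hu_diff : ∀ s ∈ J, HasDerivAt u (u' s) s)
    (hu_lip : ∀ s₁ ∈ J, ∀ s₂ ∈ J, |u' s₁ - u' s₂| ≤ C * |s₁ - s₂|)
    (hquot : (u t - u (t - δ)) / δ > (v t - v (t - δ)) / δ + ε) :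
    ∃ dm : ℝ,
      Tendsto (fun h : ℝ => (v (t + h) - v t) / h) (𝓝[<] 0) (𝓝 dm) ∧
      u' t > dm + ε / 2 := by
  set g : ℝ → ℝ := fun s => v s - C * s ^ 2 with hg
  have htJ : t ∈ J := hJ ⟨by linarith, le_refl t⟩
  have htδJ : (t - δ) ∈ J := hJ ⟨le_refl _, by linarith⟩
  -- the secant slopes of `g` through `t` are antitone
  have key : ∀ x ∈ J, ∀ y ∈ J, x ≠ t → y ≠ t → x ≤ y →
      (g y - g t) / (y - t) ≤ (g x - g t) / (x - t) := by
    intro x hx y hy hxt hyt hxy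
    have H := hv_sc.neg.secant_mono htJ hx hy hxt hyt hxy
    simp only [Pi.neg_apply] at H
    have e1 : (-g x - -g t) / (x - t) = -((g x - g t) / (x - t)) := by ring
    have e2 : (-g y - -g t) / (y - t) = -((g y - g t) / (y - t)) := by ring
    rw [e1, e2] at H
    linarith
  -- the difference quotient of `g` at `t` from the left
  set F : ℝ → ℝ := fun h => (g (t + h) - g t) / h with hF
  have memJ : ∀ h : ℝ, -δ ≤ h → h ≤ 0 → t + h ∈ J := fun h h1 h2 =>
    hJ ⟨by linarith, by linarith⟩
  have Fanti : ∀ h₁ : ℝ, -δ ≤ h₁ → ∀ h₂ : ℝ, h₂ < 0 → h₁ ≤ h₂ → F h₂ ≤ F h₁ := by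
    intro h₁ hh1 h₂ hh2 h12
    have hh1' : h₁ < 0 := lt_of_le_of_lt h12 hh2
    have := key (t + h₁) (memJ h₁ hh1 hh1'.le) (t + h₂) (memJ h₂ (hh1.trans h12) hh2.le)
      (by intro hcon; nlinarith [congrArg (fun z => z - t) hcon])
      (by intro hcon; nlinarith [congrArg (fun z => z - t) hcon])
      (by linarith)
    simpa [hF, add_sub_cancel_left] using this
  -- a point of `J` to the right of `t`, giving a lower bound for `F`
  obtain ⟨η, hη, hball⟩ := Metric.isOpen_iff.mp hJ_open t htJ
  have hwJ : t + η / 2 ∈ J := hball (by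
    rw [Metric.mem_ball, Real.dist_eq]
    have e : t + η / 2 - t = η / 2 := by ring
    rw [e, abs_of_pos (by linarith : (0:ℝ) < η / 2)]
    linarith)
  set B : ℝ := (g (t + η / 2) - g t) / (η / 2) with hB
  have Flb : ∀ h : ℝ, -δ ≤ h → h < 0 → B ≤ F h := by
    intro h h1 h2
    have := key (t + h) (memJ h h1 h2.le) (t + η / 2) hwJ
      (by intro hcon; nlinarith [congrArg (fun z => z - t) hcon])
      (by intro hcon; nlinarith [congrArg (fun z => z - t) hcon])
      (by linarith)
    simpa [hF, hB, add_sub_cancel_left] using this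
  have hbdd : BddBelow (F '' Ioo (-δ) 0) := by
    refine ⟨B, ?_⟩
    rintro z ⟨h, ⟨h1, h2⟩, rfl⟩
    exact Flb h h1.le h2
  have hne : (Ioo (-δ) 0 : Set ℝ).Nonempty := ⟨-δ / 2, by constructor <;> linarith⟩
  set L : ℝ := sInf (F '' Ioo (-δ) 0) with hL
  have hFanti' : AntitoneOn F (Ioo (-δ) 0) := by
    intro a ha b hb hab
    exact Fanti a ha.1.le b hb.2 hab
  have hFt : Tendsto F (𝓝[<] (0:ℝ)) (𝓝 L) :=
    hFanti'.tendsto_nhdsWithin_Ioo_left hne hbdd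
  -- the full difference quotient of `v`
  have hVt : Tendsto (fun h : ℝ => (v (t + h) - v t) / h) (𝓝[<] (0:ℝ)) (𝓝 (L + 2 * C * t)) := by
    have h2 : Tendsto (fun h : ℝ => C * (2 * t + h)) (𝓝[<] (0:ℝ)) (𝓝 (2 * C * t)) := by
      have : Tendsto (fun h : ℝ => C * (2 * t + h)) (𝓝 (0:ℝ)) (𝓝 (C * (2 * t + 0))) :=
        (continuous_const.mul (continuous_const.add continuous_id)).tendsto 0
      simpa [mul_comm, mul_assoc, mul_left_comm] using this.mono_left nhdsWithin_le_nhds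
    have := hFt.add h2
    refine Tendsto.congr' ?_ this
    filter_upwards [self_mem_nhdsWithin] with h (hh : h < 0)
    have hh0 : h ≠ 0 := ne_of_lt hh
    simp only [hF, hg]
    field_simp
    ring
  refine ⟨L + 2 * C * t, hVt, ?_⟩
  -- bound on L via the slope over [t-δ, t]
  have hL1 : L ≤ F (-δ / 2) :=
    csInf_le hbdd (mem_image_of_mem F ⟨by linarith, by linarith⟩)
  have hL2 : F (-δ / 2) ≤ F (-δ) := Fanti (-δ) (le_refl _) (-δ / 2) (by linarith) (by linarith)
  have hFδ : F (-δ) = (v t - v (t - δ)) / δ - C * (2 * t - δ) := by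
    simp only [hF, hg]
    have : t + -δ = t - δ := by ring
    rw [this]
    field_simp [hδ.ne']
    ring
  have hCδ : C * δ ≤ ε / 6 := by
    rw [le_div_iff₀ (by positivity : (0:ℝ) < 6 * C)] at hδε
    nlinarith
  -- mean value theorem for u on [t-δ, t]
  obtain ⟨ξ, hξ, hξ'⟩ := exists_hasDerivAt_eq_slope u u' (by linarith : t - δ < t)
    (fun s hs => (hu_diff s (hJ hs)).continuousAt.continuousWithinAt)
    (fun s hs => hu_diff s (hJ (Ioo_subset_Icc_self hs)))
  have hξJ : ξ ∈ J := hJ (Ioo_subset_Icc_self hξ)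
  have hslope : u' ξ = (u t - u (t - δ)) / δ := by
    rw [hξ']; congr 1; ring
  have hlip := hu_lip t htJ ξ hξJ
  have habs : |t - ξ| ≤ δ := by
    rw [abs_of_pos (by linarith [hξ.2] : (0:ℝ) < t - ξ)]
    linarith [hξ.1]
  have hlip' : |u' t - u' ξ| ≤ C * δ :=
    hlip.trans (by nlinarith)
  have h1 := (abs_le.mp hlip').1
  linarith [hL1, hL2, hFδ.le, hFδ.ge, hquot, hslope.le, hslope.ge]
end

section
/- Let n > 0, and let 0 < L ≤ κ be real numbers. Let F : ℝ → ℝ be nondecreasing and satisfy L(b − a) ≤ F(b) − F(a) ≤ κ(b − a) for all real a ≤ b. Let ψ ≤ 0 and ψ_∞ ≤ 0 be real numbers, and define W : (0,∞) → ℝ by W(t) = e^{−Lt}ψ + (1 − e^{−κt})ψ_∞ + Φ(t)e^{−Lt}. Then W is differentiable on (0,∞) and for every t > 0: W'(t) + F(W(t)) ≤ F(ψ_∞) + n·log(1 − e^{−Lt}). -/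
open Real

/-- the subsolution-barrier differential inequality from the
proof of the paper's Theorem 3.10. Let `n > 0`, `0 < L ≤ κ`, let `F : ℝ → ℝ`
be nondecreasing with `L(b-a) ≤ F b - F a ≤ κ(b-a)` for `a ≤ b`, and let
`ψ ≤ 0`, `ψ∞ ≤ 0`. With `Φ(t) = (n/L)(e^{Lt}-1)log(e^{Lt}-1) - n t e^{Lt}` and
`W(t) = e^{-Lt}ψ + (1-e^{-κt})ψ∞ + Φ(t)e^{-Lt}`, the function `W` is
differentiable on `(0,∞)` and `W'(t) + F(W(t)) ≤ F(ψ∞) + n log(1-e^{-Lt})`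
for every `t > 0`. -/
theorem stmt_8 (n L κ : ℝ) (hn : 0 < n) (hL : 0 < L) (hLκ : L ≤ κ)
    (F : ℝ → ℝ) (hF_mono : Monotone F)
    (hF : ∀ a b : ℝ, a ≤ b → L * (b - a) ≤ F b - F a ∧ F b - F a ≤ κ * (b - a))
    (ψ ψ' : ℝ) (hψ : ψ ≤ 0) (hψ' : ψ' ≤ 0) :
    ∀ t : ℝ, 0 < t → ∃ d : ℝ,
      HasDerivAt
        (fun s : ℝ => exp (-(L * s)) * ψ + (1 - exp (-(κ * s))) * ψ' +
          ((n / L) * (exp (L * s) - 1) * log (exp (L * s) - 1) - n * s * exp (L * s))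
            * exp (-(L * s))) d t ∧
      d + F (exp (-(L * t)) * ψ + (1 - exp (-(κ * t))) * ψ' +
          ((n / L) * (exp (L * t) - 1) * log (exp (L * t) - 1) - n * t * exp (L * t))
            * exp (-(L * t)))
        ≤ F ψ' + n * log (1 - exp (-(L * t))) := by
  intro t ht
  have hLt : 0 < L * t := mul_pos hL ht
  set E : ℝ := exp (L * t) with hEdef
  set u : ℝ := exp (-(L * t)) with hudef
  set v : ℝ := exp (-(κ * t)) with hvdef
  set ℓ : ℝ := log (E - 1) with hldef
  have hE1 : 1 < E := by
    rw [hEdef]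
    linarith [Real.add_one_le_exp (L * t)]
  have hEpos : 0 < E := lt_trans one_pos hE1
  have hEne : E ≠ 0 := ne_of_gt hEpos
  have hEm1 : 0 < E - 1 := by linarith
  have hne : E - 1 ≠ 0 := ne_of_gt hEm1
  have hLne : L ≠ 0 := ne_of_gt hL
  have hu_inv : u * E = 1 := by
    rw [hudef, hEdef, ← exp_add]
    simp
  have hupos : 0 < u := exp_pos _
  have hvpos : 0 < v := exp_pos _
  have hu1 : u < 1 := by
    rw [hudef]
    exact exp_lt_one_iff.mpr (by linarith)
  have h1u : 0 < 1 - u := by linarith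
  have hlogE : log E = L * t := by rw [hEdef, log_exp]
  -- derivatives
  have hLs : HasDerivAt (fun s : ℝ => L * s) L t := by
    simpa using (hasDerivAt_id t).const_mul L
  have hE' : HasDerivAt (fun s : ℝ => exp (L * s)) (E * L) t := hLs.exp
  have hu' : HasDerivAt (fun s : ℝ => exp (-(L * s))) (u * (-L)) t := hLs.neg.exp
  have hκs : HasDerivAt (fun s : ℝ => κ * s) κ t := by
    simpa using (hasDerivAt_id t).const_mul κ
  have hv' : HasDerivAt (fun s : ℝ => exp (-(κ * s))) (v * (-κ)) t := hκs.neg.exp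
  have h1 : HasDerivAt (fun s : ℝ => exp (-(L * s)) * ψ) ((u * (-L)) * ψ) t :=
    hu'.mul_const ψ
  have h2 : HasDerivAt (fun s : ℝ => (1 - exp (-(κ * s))) * ψ')
      ((0 - v * (-κ)) * ψ') t :=
    ((hasDerivAt_const t (1 : ℝ)).sub hv').mul_const ψ'
  have h3a : HasDerivAt (fun s : ℝ => (n / L) * (exp (L * s) - 1))
      ((n / L) * (E * L)) t := (hE'.sub_const 1).const_mul (n / L)
  have h3b : HasDerivAt (fun s : ℝ => log (exp (L * s) - 1)) ((E * L) / (E - 1)) t :=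
    (hE'.sub_const 1).log hne
  have h3c : HasDerivAt
      (fun s : ℝ => (n / L) * (exp (L * s) - 1) * log (exp (L * s) - 1))
      (((n / L) * (E * L)) * ℓ + ((n / L) * (E - 1)) * ((E * L) / (E - 1))) t :=
    h3a.mul h3b
  have h3d : HasDerivAt (fun s : ℝ => n * s * exp (L * s))
      ((n * 1) * E + (n * t) * (E * L)) t :=
    ((hasDerivAt_id t).const_mul n).mul hE'
  have hΦ' : HasDerivAt
      (fun s : ℝ => (n / L) * (exp (L * s) - 1) * log (exp (L * s) - 1)
        - n * s * exp (L * s))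
      ((((n / L) * (E * L)) * ℓ + ((n / L) * (E - 1)) * ((E * L) / (E - 1)))
        - ((n * 1) * E + (n * t) * (E * L))) t := h3c.sub h3d
  have hΦu : HasDerivAt
      (fun s : ℝ => ((n / L) * (exp (L * s) - 1) * log (exp (L * s) - 1)
        - n * s * exp (L * s)) * exp (-(L * s)))
      ((((((n / L) * (E * L)) * ℓ + ((n / L) * (E - 1)) * ((E * L) / (E - 1)))
        - ((n * 1) * E + (n * t) * (E * L)))) * u
        + ((n / L) * (E - 1) * ℓ - n * t * E) * (u * (-L))) t := hΦ'.mul hu'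
  have hW : HasDerivAt
      (fun s : ℝ => exp (-(L * s)) * ψ + (1 - exp (-(κ * s))) * ψ' +
        ((n / L) * (exp (L * s) - 1) * log (exp (L * s) - 1) - n * s * exp (L * s))
          * exp (-(L * s)))
      ((u * (-L)) * ψ + (0 - v * (-κ)) * ψ' +
        ((((((n / L) * (E * L)) * ℓ + ((n / L) * (E - 1)) * ((E * L) / (E - 1)))
          - ((n * 1) * E + (n * t) * (E * L)))) * u
          + ((n / L) * (E - 1) * ℓ - n * t * E) * (u * (-L)))) t :=
    (h1.add h2).add hΦu
  -- forget the definitions; keep only the algebraic facts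
  have hℓ : ℓ = L * t + log (1 - u) := by
    have hEu : E - 1 = E * (1 - u) := by
      have : E * u = 1 := by rw [mul_comm]; exact hu_inv
      nlinarith [this]
    rw [hldef, hEu, log_mul hEne (ne_of_gt h1u), hlogE]
  clear_value E u v ℓ
  clear hEdef hudef hvdef hldef
  -- simplified derivative
  have hD : (u * (-L)) * ψ + (0 - v * (-κ)) * ψ' +
      ((((((n / L) * (E * L)) * ℓ + ((n / L) * (E - 1)) * ((E * L) / (E - 1)))
        - ((n * 1) * E + (n * t) * (E * L)))) * u
        + ((n / L) * (E - 1) * ℓ - n * t * E) * (u * (-L)))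
      = -(L * u * ψ) + κ * (v * ψ') + n * u * ℓ := by
    have h2 : ((n / L) * (E - 1)) * ((E * L) / (E - 1)) = n * E := by
      field_simp
    have h3 : (n / L) * (E * L) = n * E := by field_simp
    have h4 : ((n / L) * (E - 1) * ℓ - n * t * E) * (u * (-L))
        = -(n * u * (E - 1) * ℓ) + n * t * E * u * L := by
      field_simp; ring
    rw [h2, h3, h4]
    ring
  rw [hD] at hW
  refine ⟨_, hW, ?_⟩
  set Φ : ℝ := (n / L) * (E - 1) * ℓ - n * t * E with hΦdef
  set W0 : ℝ := u * ψ + (1 - v) * ψ' + Φ * u with hW0def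
  clear_value Φ W0
  have hlog1u : log (1 - u) < 0 := log_neg h1u (by linarith)
  have hΦle : Φ ≤ 0 := by
    have hΦeq : Φ = -(n * t) + (n / L) * (E - 1) * log (1 - u) := by
      rw [hΦdef, hℓ]
      field_simp
      ring
    have hX : (n / L) * (E - 1) * log (1 - u) ≤ 0 :=
      mul_nonpos_of_nonneg_of_nonpos
        (mul_nonneg (div_nonneg hn.le hL.le) hEm1.le) hlog1u.le
    have hnt : 0 < n * t := mul_pos hn ht
    linarith
  have hkey : n * u * ℓ + L * (Φ * u) = n * log (1 - u) := by
    rw [hΦdef, hℓ]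
    have hexp : n * u * (L * t + log (1 - u)) +
        L * (((n / L) * (E - 1) * (L * t + log (1 - u)) - n * t * E) * u)
        = n * (u * E) * log (1 - u) + (n * L * t) * (u * E) - n * L * t * (E * u) := by
      field_simp
      ring
    rw [hexp, mul_comm E u, hu_inv]
    ring
  have hsum : (-(L * u * ψ) + κ * (v * ψ') + n * u * ℓ) + L * (W0 - ψ')
      = n * log (1 - u) + (κ - L) * (v * ψ') := by
    rw [hW0def]
    linear_combination hkey
  have hvψ' : v * ψ' ≤ 0 := mul_nonpos_of_nonneg_of_nonpos hvpos.le hψ'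
  have hκL : 0 ≤ κ - L := by linarith
  rcases le_total W0 ψ' with h | h
  · obtain ⟨hlow, _⟩ := hF W0 ψ' h
    have hpr : (κ - L) * (v * ψ') ≤ 0 := mul_nonpos_of_nonneg_of_nonpos hκL hvψ'
    linarith
  · obtain ⟨_, hup⟩ := hF ψ' W0 h
    have hst : v * ψ' + (W0 - ψ') ≤ 0 := by
      have heq : v * ψ' + (W0 - ψ') = u * ψ + Φ * u := by
        rw [hW0def]; ring
      have ha : u * ψ ≤ 0 := mul_nonpos_of_nonneg_of_nonpos hupos.le hψ
      have hb : Φ * u ≤ 0 := mul_nonpos_of_nonpos_of_nonneg hΦle hupos.le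
      linarith
    have hprod : (κ - L) * (v * ψ') + (κ - L) * (W0 - ψ') ≤ 0 := by
      have h0 := mul_nonpos_of_nonneg_of_nonpos hκL hst
      nlinarith [h0]
    have hsplit : κ * (W0 - ψ') = L * (W0 - ψ') + (κ - L) * (W0 - ψ') := by ring
    linarith
end

section
/- Let n > 0 and M ≥ 0 be real numbers, set c = n/(1 + M), let F : ℝ → ℝ be nondecreasing, and let ψ_∞ ∈ [−M, 0] be a real number. Define V : (0,∞) → ℝ by V(t) = (1 − e^{−ct})ψ_∞ + e^{−ct}. Then V is differentiable on (0,∞) and for every t > 0: V'(t) + F(V(t)) ≥ F(ψ_∞) + n·log(1 − e^{−ct}). -/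
open Real

/-- the supersolution-barrier differential inequality from
the proof of the paper's Theorem 3.10. Let `n > 0`, `M ≥ 0`, `c = n/(1+M)`,
let `F : ℝ → ℝ` be nondecreasing and `ψ∞ ∈ [-M, 0]`. With
`V(t) = (1-e^{-ct})ψ∞ + e^{-ct}`, the function `V` is differentiable on
`(0,∞)` and `V'(t) + F(V(t)) ≥ F(ψ∞) + n log(1-e^{-ct})` for every `t > 0`. -/
theorem stmt_9 (n M : ℝ) (hn : 0 < n) (hM : 0 ≤ M)
    (F : ℝ → ℝ) (hF_mono : Monotone F)
    (ψ' : ℝ) (hψ' : ψ' ∈ Set.Icc (-M) 0) :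
    ∀ t : ℝ, 0 < t → ∃ d : ℝ,
      HasDerivAt
        (fun s : ℝ => (1 - exp (-(n / (1 + M) * s))) * ψ' + exp (-(n / (1 + M) * s))) d t ∧
      F ψ' + n * log (1 - exp (-(n / (1 + M) * t)))
        ≤ d + F ((1 - exp (-(n / (1 + M) * t))) * ψ' + exp (-(n / (1 + M) * t))) := by
  intro t ht
  set c := n / (1 + M) with hc
  have h1M : (0:ℝ) < 1 + M := by linarith
  have hcpos : 0 < c := div_pos hn h1M
  have hE : HasDerivAt (fun s : ℝ => exp (-(c * s))) (-c * exp (-(c * t))) t := by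
    have h1 : HasDerivAt (fun s : ℝ => -(c * s)) (-c) t := by
      have h := ((hasDerivAt_id t).const_mul c).neg
      rw [mul_one] at h
      exact h
    simpa [mul_comm] using h1.exp
  refine ⟨c * exp (-(c * t)) * (ψ' - 1), ?_, ?_⟩
  · have := ((hE.const_sub 1).mul_const ψ').add hE
    exact this.congr_deriv (by ring)
  · have hexp : exp (-(c * t)) < 1 := by
      rw [exp_lt_one_iff]
      nlinarith
    have hx : 0 < 1 - exp (-(c * t)) := by linarith
    have hlog : log (1 - exp (-(c * t))) ≤ -exp (-(c * t)) := by
      have := Real.log_le_sub_one_of_pos hx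
      linarith
    have hV : ψ' ≤ (1 - exp (-(c * t))) * ψ' + exp (-(c * t)) := by
      nlinarith [exp_pos (-(c * t)), hψ'.2]
    have hFv := hF_mono hV
    have hcn : c * (1 - ψ') ≤ n := by
      have : (1:ℝ) - ψ' ≤ 1 + M := by linarith [hψ'.1]
      calc c * (1 - ψ') ≤ c * (1 + M) := by nlinarith
        _ = n := by rw [hc]; field_simp
    have key : n * log (1 - exp (-(c * t))) ≤ c * exp (-(c * t)) * (ψ' - 1) := by
      have h1 : n * log (1 - exp (-(c * t))) ≤ n * (-exp (-(c * t))) :=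
        mul_le_mul_of_nonneg_left hlog (le_of_lt hn)
      nlinarith [exp_pos (-(c * t))]
    linarith
end

section
/- Let T > 0, let u : (0,T) → ℝ be bounded and locally Lipschitz (Lipschitz on every compact subinterval of (0,T)), let ε ∈ (0,1/4), and let η : ℝ → ℝ be a continuously differentiable function with support contained in [−ε, ε]. Define Φ : (0, T/(1+ε)) → ℝ by Φ(t) = ∫_ℝ s^{−1} u(st) η(s−1) ds. Then Φ is differentiable on (0, T/(1+ε)) with Φ'(t) = −t^{−1} ∫_ℝ u(st) η'(s−1) ds, and Φ' is Lipschitz on every compact subinterval of (0, T/(1+ε)); more precisely, for every compact interval J ⊂ (0, T/(1+ε)), if u is κ-Lipschitz on the interval {st : s ∈ [1−ε,1+ε], t ∈ J}, then for all t₁, t₂ ∈ J one has |Φ'(t₁) − Φ'(t₂)| ≤ (2κ/t₁ + (sup_{(0,T)}|u|)/(t₁ t₂)) · (∫_ℝ |η'(s−1)| ds) · |t₁ − t₂|. -/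
open Set Filter MeasureTheory

lemma aux_contAt (T : ℝ) (u : ℝ → ℝ)
    (hu_lip : ∀ K : Set ℝ, K ⊆ Ioo 0 T → IsCompact K →
      ∃ κ : ℝ, ∀ x ∈ K, ∀ y ∈ K, |u x - u y| ≤ κ * |x - y|) :
    ∀ x ∈ Ioo 0 T, ContinuousAt u x := by
  intro x hx
  obtain ⟨hx0, hxT⟩ := hx
  set δ : ℝ := min x (T - x) / 2 with hδ
  have hδ0 : 0 < δ := by
    have : 0 < min x (T - x) := lt_min hx0 (by linarith)
    positivity
  have hδx : δ ≤ x / 2 := by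
    have := min_le_left x (T - x); rw [hδ]; linarith
  have hδT : δ ≤ (T - x) / 2 := by
    have := min_le_right x (T - x); rw [hδ]; linarith
  have hsub : Icc (x - δ) (x + δ) ⊆ Ioo 0 T := by
    intro y hy
    constructor <;> [nlinarith [hy.1]; nlinarith [hy.2]]
  obtain ⟨κ, hκ⟩ := hu_lip (Icc (x - δ) (x + δ)) hsub isCompact_Icc
  have hκ0 : LipschitzOnWith (Real.toNNReal κ) u (Icc (x - δ) (x + δ)) := by
    rw [lipschitzOnWith_iff_dist_le_mul]
    intro a ha b hb
    have h1 := hκ a ha b hb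
    have h2 : κ * |a - b| ≤ Real.toNNReal κ * |a - b| := by
      apply mul_le_mul_of_nonneg_right (Real.le_coe_toNNReal κ) (abs_nonneg _)
    rw [Real.dist_eq, Real.dist_eq]
    exact h1.trans h2
  have hmem : Icc (x - δ) (x + δ) ∈ nhds x := by
    apply Icc_mem_nhds <;> linarith
  exact (hκ0.continuousOn.continuousWithinAt (by simp [hδ0.le] : x ∈ Icc (x - δ) (x + δ))).continuousAt hmem

lemma aux_integrable (T : ℝ) (u : ℝ → ℝ)
    (hcont : ∀ x ∈ Ioo 0 T, ContinuousAt u x)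
    (ε : ℝ) (hε0 : 0 < ε) (hε1 : ε < 1)
    (f : ℝ → ℝ) (hf : Continuous f) (hf0 : ∀ x ∉ Icc (-ε) ε, f x = 0)
    (t : ℝ) (ht : t ∈ Ioo 0 (T / (1 + ε))) :
    Integrable (fun s => u (s * t) * f (s - 1)) := by
  obtain ⟨ht0, htT⟩ := ht
  have h1ε : (0:ℝ) < 1 + ε := by linarith
  have hKT : Icc ((1 - ε) * t) ((1 + ε) * t) ⊆ Ioo 0 T := by
    intro y hy
    have h1 : (1 + ε) * t < T := by
      rw [lt_div_iff₀ h1ε] at htT; nlinarith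
    constructor
    · nlinarith [hy.1]
    · nlinarith [hy.2]
  have hindic : (fun s => u (s * t) * f (s - 1)) =
      (Icc (1 - ε) (1 + ε)).indicator (fun s => u (s * t) * f (s - 1)) := by
    funext s
    by_cases hs : s ∈ Icc (1 - ε) (1 + ε)
    · rw [indicator_of_mem hs]
    · rw [indicator_of_notMem hs]
      have : f (s - 1) = 0 := by
        apply hf0
        intro hc
        exact hs ⟨by linarith [hc.1], by linarith [hc.2]⟩
      rw [this, mul_zero]
  have hco : ContinuousOn (fun s => u (s * t) * f (s - 1)) (Icc (1 - ε) (1 + ε)) := by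
    apply ContinuousOn.mul
    · intro s hs
      apply ContinuousAt.continuousWithinAt
      apply ContinuousAt.comp
      · apply hcont
        apply hKT
        constructor
        · nlinarith [hs.1]
        · nlinarith [hs.2]
      · exact (continuous_mul_right t).continuousAt
    · exact (hf.comp (continuous_sub_right 1)).continuousOn
  rw [hindic, integrable_indicator_iff measurableSet_Icc]
  exact hco.integrableOn_compact isCompact_Icc

lemma aux_deriv (T : ℝ) (hT : 0 < T) (u : ℝ → ℝ) (M : ℝ)
    (hu_bdd : ∀ t ∈ Ioo 0 T, |u t| ≤ M)
    (hcont : ∀ x ∈ Ioo 0 T, ContinuousAt u x)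
    (ε : ℝ) (hε0 : 0 < ε) (hε14 : ε < 1/4)
    (η : ℝ → ℝ) (hη : ContDiff ℝ 1 η) (hη_supp : tsupport η ⊆ Icc (-ε) ε)
    (t₀ : ℝ) (ht₀ : t₀ ∈ Ioo 0 (T / (1 + ε))) :
    HasDerivAt (fun τ : ℝ => ∫ s : ℝ, s⁻¹ * u (s * τ) * η (s - 1))
      (-(t₀⁻¹ * ∫ s : ℝ, u (s * t₀) * deriv η (s - 1))) t₀ := by
  obtain ⟨ht0, htT⟩ := ht₀
  have h1ε : (0:ℝ) < 1 + ε := by linarith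
  have h1ε' : (0:ℝ) < 1 - ε := by linarith
  have hηc : Continuous η := hη.continuous
  have hη'c : Continuous (deriv η) := hη.continuous_deriv le_rfl
  have hη0 : ∀ x ∉ Icc (-ε) ε, η x = 0 := fun x hx =>
    image_eq_zero_of_notMem_tsupport (fun h => hx (hη_supp h))
  have hη'0 : ∀ x ∉ Icc (-ε) ε, deriv η x = 0 := by
    intro x hx
    by_contra h
    exact hx (hη_supp (support_deriv_subset h))
  obtain ⟨xC, hC⟩ := (hη'c.abs).exists_forall_ge_of_hasCompactSupport
    ((HasCompactSupport.intro isCompact_Icc hη'0).abs)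
  set C := |deriv η xC| with hCdef
  have hC0 : 0 ≤ C := abs_nonneg _
  -- the radius
  set δ : ℝ := min t₀ (T / (1 + ε) - t₀) / 2 with hδdef
  have hδ0 : 0 < δ := by
    have : 0 < min t₀ (T / (1 + ε) - t₀) := lt_min ht0 (by linarith)
    positivity
  have hδ1 : δ < t₀ := by
    have := min_le_left t₀ (T / (1 + ε) - t₀); rw [hδdef]; linarith
  have hδ2 : t₀ + δ < T / (1 + ε) := by
    have := min_le_right t₀ (T / (1 + ε) - t₀); rw [hδdef]; linarith
  have hlow : 0 < t₀ - δ := by linarith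
  set K : Set ℝ := Icc ((1 - ε) * (t₀ - δ)) ((1 + ε) * (t₀ + δ)) with hKdef
  have hKT : K ⊆ Ioo 0 T := by
    intro r hr
    have hK1 : 0 < (1 - ε) * (t₀ - δ) := by positivity
    have hK2 : (1 + ε) * (t₀ + δ) < T := by
      rw [lt_div_iff₀ h1ε] at hδ2; nlinarith
    exact ⟨lt_of_lt_of_le hK1 hr.1, lt_of_le_of_lt hr.2 hK2⟩
  -- support claim
  have hsupp : ∀ t : ℝ, t₀ - δ < t → t < t₀ + δ → ∀ r ∉ K, (r * t⁻¹ - 1) ∉ Icc (-ε) ε := by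
    intro t h1 h2 r hr hmem
    have ht' : 0 < t := lt_trans hlow h1
    have hrt : (1 - ε) ≤ r * t⁻¹ ∧ r * t⁻¹ ≤ 1 + ε := by
      constructor
      · nlinarith [hmem.1]
      · nlinarith [hmem.2]
    apply hr
    constructor
    · -- (1-ε)(t₀-δ) ≤ r
      have h3 : (1 - ε) * t ≤ r := by
        have h4 : 0 ≤ (r * t⁻¹ - (1 - ε)) * t := mul_nonneg (by linarith [hrt.1]) ht'.le
        have h5 : (r * t⁻¹ - (1 - ε)) * t = r - (1 - ε) * t := by field_simp
        linarith [h5 ▸ h4]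
      nlinarith
    · have h3 : r ≤ (1 + ε) * t := by
        have h4 : 0 ≤ ((1 + ε) - r * t⁻¹) * t := mul_nonneg (by linarith [hrt.2]) ht'.le
        have h5 : ((1 + ε) - r * t⁻¹) * t = (1 + ε) * t - r := by field_simp
        linarith [h5 ▸ h4]
      nlinarith
  -- generic measurability + integrability on K
  have hucoK : ContinuousOn u K := fun r hr => (hcont r (hKT hr)).continuousWithinAt
  have hrinvK : ContinuousOn (fun r : ℝ => r⁻¹) K := by
    apply ContinuousOn.inv₀ continuousOn_id
    intro r hr
    have : 0 < (1 - ε) * (t₀ - δ) := by positivity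
    exact ne_of_gt (lt_of_lt_of_le this hr.1)
  have hgen : ∀ g : ℝ → ℝ, Continuous g → (∀ r ∉ K, g r = 0) →
      AEStronglyMeasurable (fun r : ℝ => r⁻¹ * u r * g r) volume ∧
      Integrable (fun r : ℝ => r⁻¹ * u r * g r) := by
    intro g hg hg0
    have heq : (fun r : ℝ => r⁻¹ * u r * g r) = K.indicator (fun r => r⁻¹ * u r * g r) := by
      funext r
      by_cases hr : r ∈ K
      · rw [indicator_of_mem hr]
      · rw [indicator_of_notMem hr, hg0 r hr, mul_zero]
    have hco : ContinuousOn (fun r : ℝ => r⁻¹ * u r * g r) K :=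
      (hrinvK.mul hucoK).mul hg.continuousOn
    constructor
    · rw [heq]
      exact (aestronglyMeasurable_indicator_iff measurableSet_Icc).mpr
        (hco.aestronglyMeasurable measurableSet_Icc)
    · rw [heq, integrable_indicator_iff measurableSet_Icc]
      exact hco.integrableOn_compact isCompact_Icc
  -- the two parametrized functions
  set F : ℝ → ℝ → ℝ := fun t r => r⁻¹ * u r * η (r * t⁻¹ - 1) with hFdef
  set F' : ℝ → ℝ → ℝ := fun t r => r⁻¹ * u r * (deriv η (r * t⁻¹ - 1) * (r * (-(t^2)⁻¹))) with hF'def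
  have hballmem : ∀ t ∈ Metric.ball t₀ δ, t₀ - δ < t ∧ t < t₀ + δ := by
    intro t ht
    rw [Metric.mem_ball, Real.dist_eq, abs_lt] at ht
    constructor <;> linarith [ht.1, ht.2]
  have hFmeas : ∀ t : ℝ, t₀ - δ < t → t < t₀ + δ → AEStronglyMeasurable (F t) volume := by
    intro t h1 h2
    exact (hgen (fun r => η (r * t⁻¹ - 1))
      (hηc.comp ((continuous_mul_right t⁻¹).sub continuous_const))
      (fun r hr => hη0 _ (hsupp t h1 h2 r hr))).1
  have hFint : Integrable (F t₀) := by
    exact (hgen (fun r => η (r * t₀⁻¹ - 1))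
      (hηc.comp ((continuous_mul_right t₀⁻¹).sub continuous_const))
      (fun r hr => hη0 _ (hsupp t₀ (by linarith) (by linarith) r hr))).2
  have hF'gen := fun (t : ℝ) (h1 : t₀ - δ < t) (h2 : t < t₀ + δ) =>
    hgen (fun r => deriv η (r * t⁻¹ - 1) * (r * (-(t^2)⁻¹)))
      ((hη'c.comp ((continuous_mul_right t⁻¹).sub continuous_const)).mul
        ((continuous_id.mul continuous_const)))
      (fun r hr => by show deriv η (r * t⁻¹ - 1) * (r * -(t^2)⁻¹) = 0
                      rw [hη'0 _ (hsupp t h1 h2 r hr), zero_mul])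
  have hF'meas : AEStronglyMeasurable (F' t₀) volume :=
    (hF'gen t₀ (by linarith) (by linarith)).1
  -- the bound
  set B : ℝ := M * C * ((t₀ - δ)^2)⁻¹ with hBdef
  have hM0 : 0 ≤ M := le_trans (abs_nonneg _)
    (hu_bdd (T/2) ⟨by linarith, by linarith⟩)
  have hbound : ∀ r : ℝ, ∀ t ∈ Metric.ball t₀ δ, ‖F' t r‖ ≤ K.indicator (fun _ => B) r := by
    intro r t ht
    obtain ⟨h1, h2⟩ := hballmem t ht
    have ht' : 0 < t := lt_trans hlow h1
    by_cases hr : r ∈ K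
    · rw [indicator_of_mem hr]
      have hr0 : 0 < r := (hKT hr).1
      have habs : ‖F' t r‖ = |u r| * |deriv η (r * t⁻¹ - 1)| * (t^2)⁻¹ := by
        simp only [hF'def, Real.norm_eq_abs, abs_mul, abs_neg, abs_inv, abs_pow, sq_abs,
          abs_of_pos hr0, abs_of_pos ht']
        field_simp
      rw [habs]
      have hb1 : |u r| ≤ M := hu_bdd r (hKT hr)
      have hb2 : |deriv η (r * t⁻¹ - 1)| ≤ C := hC _
      have hb3 : (t^2)⁻¹ ≤ ((t₀ - δ)^2)⁻¹ := by
        apply inv_anti₀ (by positivity)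
        nlinarith
      calc |u r| * |deriv η (r * t⁻¹ - 1)| * (t^2)⁻¹
          ≤ M * C * (t^2)⁻¹ := by
            apply mul_le_mul_of_nonneg_right _ (by positivity)
            exact mul_le_mul hb1 hb2 (abs_nonneg _) hM0
        _ ≤ B := mul_le_mul_of_nonneg_left hb3 (mul_nonneg hM0 hC0)
    · rw [indicator_of_notMem hr]
      have : deriv η (r * t⁻¹ - 1) = 0 := hη'0 _ (hsupp t h1 h2 r hr)
      simp [hF'def, this]
  have hbound_int : Integrable (K.indicator (fun _ : ℝ => B)) := by
    rw [integrable_indicator_iff measurableSet_Icc]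
    apply (integrableOn_const_iff (C := B)).mpr
    right
    exact measure_Icc_lt_top
  -- differentiability in t
  have hdiff : ∀ r : ℝ, ∀ t ∈ Metric.ball t₀ δ, HasDerivAt (fun t => F t r) (F' t r) t := by
    intro r t ht
    obtain ⟨h1, h2⟩ := hballmem t ht
    have ht' : (0:ℝ) < t := lt_trans hlow h1
    have hinner : HasDerivAt (fun t : ℝ => r * t⁻¹ - 1) (r * (-(t^2)⁻¹)) t :=
      ((hasDerivAt_inv ht'.ne').const_mul r).sub_const 1
    have houter : HasDerivAt η (deriv η (r * t⁻¹ - 1)) (r * t⁻¹ - 1) :=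
      ((hη.differentiable one_ne_zero) _).hasDerivAt
    exact (houter.comp t hinner).const_mul (r⁻¹ * u r)
  -- apply dominated-derivative theorem
  have key := hasDerivAt_integral_of_dominated_loc_of_deriv_le (Metric.ball_mem_nhds t₀ hδ0)
    (Filter.eventually_of_mem (Ioo_mem_nhds (by linarith) (by linarith))
      (fun t ht => hFmeas t ht.1 ht.2))
    hFint hF'meas
    (Filter.Eventually.of_forall (fun r => fun t ht => hbound r t ht))
    hbound_int
    (Filter.Eventually.of_forall (fun r => fun t ht => hdiff r t ht))
  obtain ⟨-, hPsi⟩ := key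
  -- identify the derivative value
  have hη'm1 : deriv η (-1 : ℝ) = 0 := by
    apply hη'0
    intro h
    have := h.1
    linarith
  have hptwise : ∀ r : ℝ, F' t₀ r = (-(t₀^2)⁻¹) * (u r * deriv η (r * t₀⁻¹ - 1)) := by
    intro r
    by_cases hr : r = 0
    · subst hr
      simp [hF'def, hη'm1]
    · rw [hF'def]
      field_simp
  have hval : (∫ r : ℝ, F' t₀ r) = -(t₀⁻¹ * ∫ s : ℝ, u (s * t₀) * deriv η (s - 1)) := by
    have hs1 : (∫ r : ℝ, F' t₀ r) = (-(t₀^2)⁻¹) * ∫ r : ℝ, u r * deriv η (r * t₀⁻¹ - 1) := by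
      simp_rw [hptwise]
      exact integral_const_mul _ _
    have hs2 : (∫ s : ℝ, u (s * t₀) * deriv η (s - 1))
        = t₀⁻¹ * ∫ r : ℝ, u r * deriv η (r * t₀⁻¹ - 1) := by
      have h := MeasureTheory.Measure.integral_comp_mul_right
        (fun r : ℝ => u r * deriv η (r * t₀⁻¹ - 1)) t₀
      have h2 : ∀ s : ℝ, u (s * t₀) * deriv η (s * t₀ * t₀⁻¹ - 1)
          = u (s * t₀) * deriv η (s - 1) := by
        intro s; rw [mul_inv_cancel_right₀ ht0.ne']
      simp_rw [h2] at h
      rw [h, abs_inv, abs_of_pos ht0, smul_eq_mul]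
    rw [hs1, hs2]
    rw [sq, mul_inv]
    ring
  rw [hval] at hPsi
  -- identify the function on a neighborhood
  have hfun : ∀ t ∈ Ioo 0 (T / (1 + ε)),
      (∫ s : ℝ, s⁻¹ * u (s * t) * η (s - 1)) = ∫ r : ℝ, F t r := by
    intro t ht
    have ht' : (0:ℝ) < t := ht.1
    have h := MeasureTheory.Measure.integral_comp_mul_right (fun r : ℝ => F t r) t
    have h2 : ∀ s : ℝ, F t (s * t) = t⁻¹ * (s⁻¹ * u (s * t) * η (s - 1)) := by
      intro s
      rw [hFdef]
      simp only
      rw [mul_inv_cancel_right₀ ht'.ne', mul_inv]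
      ring
    simp_rw [h2] at h
    rw [integral_const_mul, abs_inv, abs_of_pos ht', smul_eq_mul] at h
    exact mul_left_cancel₀ (inv_ne_zero ht'.ne') h
  have hEq : (fun τ : ℝ => ∫ s : ℝ, s⁻¹ * u (s * τ) * η (s - 1))
      =ᶠ[nhds t₀] (fun t => ∫ r : ℝ, F t r) :=
    Filter.eventually_of_mem (isOpen_Ioo.mem_nhds ⟨ht0, htT⟩) (fun t ht => hfun t ht)
  exact hPsi.congr_of_eventuallyEq hEq


/-- the time-mollification estimate from the proof of the
paper's Theorem 3.8, one-variable content. Let `T > 0`, `u : (0,T) → ℝ`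
bounded (by `M`) and Lipschitz on every compact subinterval of `(0,T)`, let
`ε ∈ (0,1/4)` and let `η` be `C¹` with support in `[-ε,ε]`. Define
`Φ(t) = ∫ s⁻¹ u(st) η(s-1) ds` on `(0, T/(1+ε))`. Then `Φ` is differentiable
with `Φ'(t) = -t⁻¹ ∫ u(st) η'(s-1) ds`, and for any compact interval
`J = [a,b] ⊂ (0, T/(1+ε))`, if `u` is `κ`-Lipschitz on
`{s t : s ∈ [1-ε,1+ε], t ∈ J}` then for all `t₁, t₂ ∈ J`,
`|Φ'(t₁) - Φ'(t₂)| ≤ (2κ/t₁ + M/(t₁ t₂)) (∫ |η'(s-1)| ds) |t₁ - t₂|`. -/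
theorem stmt_12 (T : ℝ) (hT : 0 < T) (u : ℝ → ℝ) (M : ℝ)
    (hu_bdd : ∀ t ∈ Ioo 0 T, |u t| ≤ M)
    (hu_lip : ∀ K : Set ℝ, K ⊆ Ioo 0 T → IsCompact K →
      ∃ κ : ℝ, ∀ x ∈ K, ∀ y ∈ K, |u x - u y| ≤ κ * |x - y|)
    (ε : ℝ) (hε : ε ∈ Ioo (0 : ℝ) (1 / 4))
    (η : ℝ → ℝ) (hη : ContDiff ℝ 1 η) (hη_supp : tsupport η ⊆ Icc (-ε) ε) :
    (∀ t ∈ Ioo 0 (T / (1 + ε)),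
      HasDerivAt (fun τ : ℝ => ∫ s : ℝ, s⁻¹ * u (s * τ) * η (s - 1))
        (-(t⁻¹ * ∫ s : ℝ, u (s * t) * deriv η (s - 1))) t) ∧
    (∀ a b : ℝ, Icc a b ⊆ Ioo 0 (T / (1 + ε)) →
      ∀ κ : ℝ,
        (∀ x ∈ image2 (· * ·) (Icc (1 - ε) (1 + ε)) (Icc a b),
         ∀ y ∈ image2 (· * ·) (Icc (1 - ε) (1 + ε)) (Icc a b),
          |u x - u y| ≤ κ * |x - y|) →
        ∀ t₁ ∈ Icc a b, ∀ t₂ ∈ Icc a b,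
          |(-(t₁⁻¹ * ∫ s : ℝ, u (s * t₁) * deriv η (s - 1))) -
              (-(t₂⁻¹ * ∫ s : ℝ, u (s * t₂) * deriv η (s - 1)))|
            ≤ (2 * κ / t₁ + M / (t₁ * t₂)) * (∫ s : ℝ, |deriv η (s - 1)|) * |t₁ - t₂|) := by
  obtain ⟨hε0, hε14⟩ := hε
  have hcont := aux_contAt T u hu_lip
  have hη'c : Continuous (deriv η) := hη.continuous_deriv le_rfl
  have hη'0 : ∀ x ∉ Icc (-ε) ε, deriv η x = 0 := by
    intro x hx
    by_contra h
    exact hx (hη_supp (support_deriv_subset h))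
  constructor
  · exact fun t ht => aux_deriv T hT u M hu_bdd hcont ε hε0 hε14 η hη hη_supp t ht
  intro a b hab κ hκ t₁ ht₁ t₂ ht₂
  have hab' : a ≤ b := le_trans ht₁.1 ht₁.2
  have hamem : a ∈ Icc a b := ⟨le_refl a, hab'⟩
  have ha0 : 0 < a := (hab hamem).1
  have ht₁' : t₁ ∈ Ioo 0 (T / (1 + ε)) := hab ht₁
  have ht₂' : t₂ ∈ Ioo 0 (T / (1 + ε)) := hab ht₂
  have ht₁0 : 0 < t₁ := ht₁'.1
  have ht₂0 : 0 < t₂ := ht₂'.1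
  -- κ is nonnegative
  have hκ0 : 0 ≤ κ := by
    have hm1 : (1 - ε) * a ∈ image2 (· * ·) (Icc (1 - ε) (1 + ε)) (Icc a b) :=
      mem_image2_of_mem ⟨le_refl _, by linarith⟩ hamem
    have hm2 : (1 + ε) * a ∈ image2 (· * ·) (Icc (1 - ε) (1 + ε)) (Icc a b) :=
      mem_image2_of_mem ⟨by linarith, le_refl _⟩ hamem
    have h1 := hκ _ hm1 _ hm2
    have h2 : |(1 - ε) * a - (1 + ε) * a| = 2 * ε * a := by
      rw [abs_of_nonpos (by nlinarith)]; ring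
    rw [h2] at h1
    have h3 : 0 ≤ κ * (2 * ε * a) := le_trans (abs_nonneg _) h1
    nlinarith [h3, mul_pos hε0 ha0]
  set A₁ : ℝ := ∫ s : ℝ, u (s * t₁) * deriv η (s - 1) with hA₁
  set A₂ : ℝ := ∫ s : ℝ, u (s * t₂) * deriv η (s - 1) with hA₂
  set I : ℝ := ∫ s : ℝ, |deriv η (s - 1)| with hI
  have hI0 : 0 ≤ I := integral_nonneg (fun s => abs_nonneg _)
  have hIint : Integrable (fun s : ℝ => |deriv η (s - 1)|) := by
    apply Continuous.integrable_of_hasCompactSupport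
      ((hη'c.comp (continuous_sub_right 1)).abs)
    apply HasCompactSupport.intro (isCompact_Icc (a := 1 - ε) (b := 1 + ε))
    intro s hs
    have : deriv η (s - 1) = 0 := by
      apply hη'0
      intro hc
      exact hs ⟨by linarith [hc.1], by linarith [hc.2]⟩
    simp [this]
  have hint₁ : Integrable (fun s : ℝ => u (s * t₁) * deriv η (s - 1)) :=
    aux_integrable T u hcont ε hε0 (by linarith) (deriv η) hη'c hη'0 t₁ ht₁'
  have hint₂ : Integrable (fun s : ℝ => u (s * t₂) * deriv η (s - 1)) :=
    aux_integrable T u hcont ε hε0 (by linarith) (deriv η) hη'c hη'0 t₂ ht₂'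
  -- first estimate
  have est1 : |A₁ - A₂| ≤ 2 * κ * |t₁ - t₂| * I := by
    rw [hA₁, hA₂, ← integral_sub hint₁ hint₂]
    have hptw : ∀ s : ℝ, ‖u (s * t₁) * deriv η (s - 1) - u (s * t₂) * deriv η (s - 1)‖
        ≤ 2 * κ * |t₁ - t₂| * |deriv η (s - 1)| := by
      intro s
      by_cases hd : deriv η (s - 1) = 0
      · simp [hd]
      · have hs1 : 1 - ε ≤ s ∧ s ≤ 1 + ε := by
          by_contra hc
          apply hd
          apply hη'0
          intro hc2
          exact hc ⟨by linarith [hc2.1], by linarith [hc2.2]⟩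
        have hm1 : s * t₁ ∈ image2 (· * ·) (Icc (1 - ε) (1 + ε)) (Icc a b) :=
          mem_image2_of_mem ⟨hs1.1, hs1.2⟩ ht₁
        have hm2 : s * t₂ ∈ image2 (· * ·) (Icc (1 - ε) (1 + ε)) (Icc a b) :=
          mem_image2_of_mem ⟨hs1.1, hs1.2⟩ ht₂
        have hu12 := hκ _ hm1 _ hm2
        have heq : |s * t₁ - s * t₂| = |s| * |t₁ - t₂| := by
          rw [show s * t₁ - s * t₂ = s * (t₁ - t₂) by ring, abs_mul]
        have hsle : |s| ≤ 2 := abs_le.mpr ⟨by linarith, by linarith⟩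
        have hmain : |u (s * t₁) - u (s * t₂)| ≤ 2 * κ * |t₁ - t₂| := by
          rw [heq] at hu12
          nlinarith [mul_nonneg (mul_nonneg hκ0 (sub_nonneg.2 hsle)) (abs_nonneg (t₁ - t₂))]
        calc ‖u (s * t₁) * deriv η (s - 1) - u (s * t₂) * deriv η (s - 1)‖
            = |u (s * t₁) - u (s * t₂)| * |deriv η (s - 1)| := by
              rw [Real.norm_eq_abs, show u (s * t₁) * deriv η (s - 1)
                - u (s * t₂) * deriv η (s - 1)
                = (u (s * t₁) - u (s * t₂)) * deriv η (s - 1) by ring, abs_mul]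
          _ ≤ 2 * κ * |t₁ - t₂| * |deriv η (s - 1)| :=
              mul_le_mul_of_nonneg_right hmain (abs_nonneg _)
    have h := norm_integral_le_of_norm_le (hIint.const_mul (2 * κ * |t₁ - t₂|))
      (Filter.Eventually.of_forall hptw)
    rw [integral_const_mul, Real.norm_eq_abs] at h
    exact h
  -- second estimate
  have est2 : |A₂| ≤ M * I := by
    have hptw : ∀ s : ℝ, ‖u (s * t₂) * deriv η (s - 1)‖ ≤ M * |deriv η (s - 1)| := by
      intro s
      by_cases hd : deriv η (s - 1) = 0
      · simp [hd]
      · have hs1 : 1 - ε ≤ s ∧ s ≤ 1 + ε := by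
          by_contra hc
          apply hd
          apply hη'0
          intro hc2
          exact hc ⟨by linarith [hc2.1], by linarith [hc2.2]⟩
        have hst : s * t₂ ∈ Ioo 0 T := by
          have h2 : (1 + ε) * t₂ < T := by
            have := ht₂'.2
            rw [lt_div_iff₀ (by linarith : (0:ℝ) < 1 + ε)] at this
            linarith
          constructor
          · nlinarith [hs1.1]
          · nlinarith [hs1.2]
        rw [Real.norm_eq_abs, abs_mul]
        exact mul_le_mul_of_nonneg_right (hu_bdd _ hst) (abs_nonneg _)
    have h := norm_integral_le_of_norm_le (hIint.const_mul M)
      (Filter.Eventually.of_forall hptw)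
    rw [integral_const_mul, Real.norm_eq_abs] at h
    exact h
  -- combine
  have hsplit : (-(t₁⁻¹ * A₁)) - (-(t₂⁻¹ * A₂))
      = t₁⁻¹ * (A₂ - A₁) + (t₂⁻¹ - t₁⁻¹) * A₂ := by ring
  rw [hsplit]
  have habsinv : |t₂⁻¹ - t₁⁻¹| = |t₁ - t₂| / (t₁ * t₂) := by
    have h0 : t₂⁻¹ - t₁⁻¹ = (t₁ - t₂) / (t₁ * t₂) := by
      field_simp
    rw [h0, abs_div, abs_of_pos (mul_pos ht₁0 ht₂0)]
  calc |t₁⁻¹ * (A₂ - A₁) + (t₂⁻¹ - t₁⁻¹) * A₂|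
      ≤ |t₁⁻¹ * (A₂ - A₁)| + |(t₂⁻¹ - t₁⁻¹) * A₂| := abs_add_le _ _
    _ = t₁⁻¹ * |A₂ - A₁| + |t₂⁻¹ - t₁⁻¹| * |A₂| := by
        rw [abs_mul, abs_mul, abs_of_pos (inv_pos.2 ht₁0)]
    _ ≤ t₁⁻¹ * (2 * κ * |t₁ - t₂| * I) + (|t₁ - t₂| / (t₁ * t₂)) * (M * I) := by
        apply add_le_add
        · exact mul_le_mul_of_nonneg_left (by rw [abs_sub_comm]; exact est1)
            (by positivity)
        · rw [habsinv]
          exact mul_le_mul_of_nonneg_left est2 (by positivity)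
    _ = (2 * κ / t₁ + M / (t₁ * t₂)) * I * |t₁ - t₂| := by
        simp only [div_eq_mul_inv, mul_inv]
        ring
end
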